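/- hm(c_min) ≤ Cov(Lip(ℝ)), i.e., the homogeneity number of c_min is at most the least cardinality of a family F of Lipschitz functions from ℝ to ℝ (each Lipschitz with some constant) such that for every (x,y) ∈ ℝ × ℝ there is f ∈ F with f(x) = y or f(y) = x. -/

import Mathlib

open Cardinal Topology

/-- The least index where two sequences differ. -/
noncomputable def Delta {α : Type*} (x y : ℕ → α) : ℕ := sInf {n | x n ≠ y n}

/-- A set is homogeneous for a pair-coloring `c` if `c` is constant on pairs of
distinct elements of the set. -/
def IsHomog {X : Type*} (c : X → X → Fin 2) (H : Set X) : Prop :=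
  ∃ i : Fin 2, ∀ x ∈ H, ∀ y ∈ H, x ≠ y → c x y = i

/-- The homogeneity number of a pair-coloring: the least cardinality of a family of
homogeneous sets covering the space. -/
noncomputable def hm {X : Type*} (c : X → X → Fin 2) : Cardinal :=
  sInf { κ | ∃ F : Set (Set X), #F = κ ∧ (∀ H ∈ F, IsHomog c H) ∧ ⋃₀ F = Set.univ }

/-- The homogeneity number of the restriction of a coloring to a subset. -/
noncomputable def hmOn {X : Type*} (c : X → X → Fin 2) (Y : Set X) : Cardinal :=
  sInf { κ | ∃ F : Set (Set X), #F = κ ∧ (∀ H ∈ F, H ⊆ Y ∧ IsHomog c H) ∧ ⋃₀ F = Y }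

/-- A pair-coloring is continuous if it is continuous on `X × X` minus the diagonal. -/
def ContColoring {X : Type*} [TopologicalSpace X] (c : X → X → Fin 2) : Prop :=
  Continuous fun p : {q : X × X // q.1 ≠ q.2} => c p.val.1 p.val.2

/-- Symmetry of a pair-coloring on distinct points. -/
def SymmColoring {X : Type*} (c : X → X → Fin 2) : Prop :=
  ∀ x y : X, x ≠ y → c x y = c y x

/-- A continuous pair-coloring is reduced if no nonempty open set is homogeneous. -/
def Reduced {X : Type*} [TopologicalSpace X] (c : X → X → Fin 2) : Prop :=
  ContColoring c ∧ ∀ U : Set X, IsOpen U → U.Nonempty → ¬ IsHomog c U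

/-- The coloring `c_min` on the Cantor space: the parity of the first difference. -/
noncomputable def cmin : (ℕ → Bool) → (ℕ → Bool) → Fin 2 :=
  fun x y => if Even (Delta x y) then 0 else 1

/-- The coloring `c_parity` on the Baire space: the parity of the first difference. -/
noncomputable def cparity : (ℕ → ℕ) → (ℕ → ℕ) → Fin 2 :=
  fun x y => if Even (Delta x y) then 0 else 1

namespace St16

lemma delta_eq {α : Type*} {x y : ℕ → α} {d : ℕ} (h1 : x d ≠ y d)
    (h2 : ∀ k < d, x k = y k) : Delta x y = d := by
  have hmem : d ∈ {n | x n ≠ y n} := h1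
  have hle : Delta x y ≤ d := Nat.sInf_le hmem
  rcases lt_or_eq_of_le hle with h | h
  · have hm2 : Delta x y ∈ {n | x n ≠ y n} := Nat.sInf_mem ⟨d, hmem⟩
    exact absurd (h2 _ h) hm2
  · exact h

lemma delta_mem {α : Type*} {x y : ℕ → α} (h : x ≠ y) :
    x (Delta x y) ≠ y (Delta x y) :=
  Nat.sInf_mem (Function.ne_iff.mp h)

lemma delta_lt {α : Type*} {x y : ℕ → α} (h : x ≠ y) {k : ℕ}
    (hk : k < Delta x y) : x k = y k := by
  by_contra hc
  exact absurd hk (not_lt.mpr (Nat.sInf_le hc))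

/-- even part -/
def ev (z : ℕ → Bool) (n : ℕ) : Bool := z (2*n)
/-- odd part -/
def od (z : ℕ → Bool) (n : ℕ) : Bool := z (2*n+1)

lemma ext_evod {z z' : ℕ → Bool} (h1 : ev z = ev z') (h2 : od z = od z') : z = z' := by
  funext n
  rcases Nat.even_or_odd n with ⟨j, hj⟩ | ⟨j, hj⟩
  · have : n = 2*j := by omega
    subst this; exact congrFun h1 j
  · have : n = 2*j+1 := by omega
    subst this; exact congrFun h2 j

lemma delta_even {z z' : ℕ → Bool} (hev : ev z ≠ ev z')
    (h : ∀ j < Delta (ev z) (ev z'), od z j = od z' j) :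
    Delta z z' = 2 * Delta (ev z) (ev z') := by
  refine delta_eq (d := 2 * Delta (ev z) (ev z')) (delta_mem hev) ?_
  intro k hk
  rcases Nat.even_or_odd k with ⟨j, hj⟩ | ⟨j, hj⟩
  · have hkj : k = 2*j := by omega
    subst hkj
    exact delta_lt hev (by omega)
  · have hkj : k = 2*j+1 := by omega
    subst hkj
    exact h j (by omega)

lemma delta_odd {z z' : ℕ → Bool} (hod : od z ≠ od z')
    (h : ∀ j ≤ Delta (od z) (od z'), ev z j = ev z' j) :
    Delta z z' = 2 * Delta (od z) (od z') + 1 := by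
  refine delta_eq (d := 2 * Delta (od z) (od z') + 1) (delta_mem hod) ?_
  intro k hk
  rcases Nat.even_or_odd k with ⟨j, hj⟩ | ⟨j, hj⟩
  · have hkj : k = 2*j := by omega
    subst hkj
    exact h j (by omega)
  · have hkj : k = 2*j+1 := by omega
    subst hkj
    exact delta_lt hod (by omega)

/-- the real embedding with scale exponents `γ` -/
noncomputable def emb (γ : ℕ → ℕ) (a : ℕ → Bool) : ℝ :=
  ∑' n, (if a n then (2:ℝ) else 0) / 3 ^ γ n

section emb

variable {γ : ℕ → ℕ}

lemma summable_emb (hγ : ∀ n, n ≤ γ n) (a : ℕ → Bool) :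
    Summable (fun n => (if a n then (2:ℝ) else 0) / 3 ^ γ n) := by
  apply Summable.of_nonneg_of_le (fun n => by positivity)
    (f := fun n => 2 * (1/3:ℝ)^n)
  · intro n
    have h1 : (3:ℝ)^n ≤ 3 ^ γ n := pow_le_pow_right₀ (by norm_num) (hγ n)
    have h2 : (if a n then (2:ℝ) else 0) ≤ 2 := by split <;> norm_num
    calc (if a n then (2:ℝ) else 0) / 3 ^ γ n ≤ 2 / 3 ^ n := by
          gcongr
      _ = 2 * (1/3:ℝ)^n := by rw [one_div, inv_pow]; ring
  · exact (summable_geometric_of_lt_one (by norm_num) (by norm_num)).mul_left 2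

lemma gap_mono (hg : ∀ n, γ n + 2 ≤ γ (n+1)) : Monotone γ :=
  monotone_nat_of_le_succ (fun n => by have := hg n; omega)

lemma gap_ge (hg : ∀ n, γ n + 2 ≤ γ (n+1)) : ∀ n, n ≤ γ n := by
  intro n
  induction n with
  | zero => omega
  | succ k ih => have := hg k; omega

lemma gap_shift (hg : ∀ n, γ n + 2 ≤ γ (n+1)) (d : ℕ) :
    ∀ n, γ d + 2 * (n + 1) ≤ γ (n + (d + 1)) := by
  intro n
  induction n with
  | zero => simpa using hg d
  | succ k ih =>
    have e : k + 1 + (d + 1) = (k + (d + 1)) + 1 := by omega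
    rw [e]
    have := hg (k + (d + 1))
    omega

lemma emb_sub_bounds (hg : ∀ n, γ n + 2 ≤ γ (n+1)) {a b : ℕ → Bool} (hab : a ≠ b) :
    ((3:ℝ) ^ γ (Delta a b))⁻¹ ≤ |emb γ a - emb γ b| ∧
      |emb γ a - emb γ b| ≤ 3 / 3 ^ γ (Delta a b) := by
  have hγ : ∀ n, n ≤ γ n := gap_ge hg
  set d := Delta a b with hd
  set g : ℕ → ℝ := fun n =>
    ((if a n then (2:ℝ) else 0) - (if b n then 2 else 0)) / 3 ^ γ n with hgdef
  have hsum : Summable g := by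
    have := (summable_emb hγ a).sub (summable_emb hγ b)
    simpa [hgdef, sub_div] using this
  have hdiff : emb γ a - emb γ b = ∑' n, g n := by
    rw [emb, emb, ← Summable.tsum_sub (summable_emb hγ a) (summable_emb hγ b)]
    congr 1; funext n; exact (sub_div _ _ _).symm
  have hsplit : (∑ n ∈ Finset.range (d+1), g n) + ∑' n, g (n + (d+1)) = ∑' n, g n :=
    Summable.sum_add_tsum_nat_add (d+1) hsum
  have hhead : ∑ n ∈ Finset.range (d+1), g n = g d := by
    apply Finset.sum_eq_single_of_mem d (Finset.self_mem_range_succ d)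
    intro n hn hne
    have hlt : n < d := by simp only [Finset.mem_range] at hn; omega
    have : a n = b n := delta_lt hab hlt
    simp [hgdef, this]
  have hP : (0:ℝ) < 3 ^ γ d := by positivity
  have habsd : |g d| = 2 / 3 ^ γ d := by
    have hne := delta_mem hab
    cases hA : a d <;> cases hB : b d
    · simp [← hd, hA, hB] at hne
    · rw [hgdef]; norm_num [hA, hB, abs_div, abs_of_pos hP]
    · rw [hgdef]; norm_num [hA, hB, abs_div, abs_of_pos hP]
    · simp [← hd, hA, hB] at hne
  have htail : |∑' n, g (n + (d+1))| ≤ 1/4 * ((3:ℝ) ^ γ d)⁻¹ := by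
    have hbd : ∀ n : ℕ, ‖g (n + (d+1))‖ ≤ (2 / 3 ^ γ d / 9) * (1/9:ℝ)^n := by
      intro n
      have h1 : γ d + 2 * (n+1) ≤ γ (n + (d+1)) := gap_shift hg d n
      have h2 : (3:ℝ) ^ (γ d + 2 * (n+1)) ≤ 3 ^ γ (n + (d+1)) :=
        pow_le_pow_right₀ (by norm_num) h1
      have h3 : ‖g (n + (d+1))‖ ≤ 2 / 3 ^ γ (n + (d+1)) := by
        rw [hgdef, Real.norm_eq_abs, abs_div,
          abs_of_pos (by positivity : (0:ℝ) < 3 ^ γ (n + (d+1)))]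
        gcongr
        split <;> split <;> norm_num
      refine h3.trans ?_
      have h4 : (2:ℝ) / 3 ^ γ (n + (d+1)) ≤ 2 / 3 ^ (γ d + 2 * (n+1)) := by
        gcongr <;> norm_num
      refine h4.trans (le_of_eq ?_)
      have h5 : (3:ℝ) ^ (γ d + 2 * (n+1)) = 3 ^ γ d * 9 ^ (n+1) := by
        rw [pow_add, pow_mul]; norm_num
      rw [h5]
      rw [div_div, one_div, inv_pow, pow_succ]
      field_simp
    have hgeo : HasSum (fun n : ℕ => (2 / 3 ^ γ d / 9) * (1/9:ℝ)^n)
        ((2 / 3 ^ γ d / 9) * (1 - 1/9:ℝ)⁻¹) :=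
      (hasSum_geometric_of_lt_one (by norm_num) (by norm_num)).mul_left _
    have hb2 := tsum_of_norm_bounded hgeo hbd
    rw [Real.norm_eq_abs] at hb2
    refine hb2.trans (le_of_eq ?_)
    rw [show ((1:ℝ) - 1/9)⁻¹ = 9/8 by norm_num]
    field_simp
    ring
  set T := ∑' n, g (n + (d+1)) with hT
  have hS : emb γ a - emb γ b = g d + T := by rw [hdiff, ← hsplit, hhead]
  have habs1 : |g d| ≤ |g d + T| + |T| := by
    calc |g d| = |(g d + T) + (-T)| := by ring_nf
      _ ≤ |g d + T| + |(-T)| := abs_add_le _ _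
      _ = |g d + T| + |T| := by rw [abs_neg]
  have habs2 : |g d + T| ≤ |g d| + |T| := abs_add_le _ _
  have h2P : (2:ℝ) / 3 ^ γ d = 2 * (3 ^ γ d)⁻¹ := by rw [div_eq_mul_inv]
  have h3P : (3:ℝ) / 3 ^ γ d = 3 * (3 ^ γ d)⁻¹ := by rw [div_eq_mul_inv]
  have hPinv : (0:ℝ) < (3 ^ γ d)⁻¹ := by positivity
  rw [hS]
  constructor
  · nlinarith [abs_nonneg T]
  · nlinarith [abs_nonneg T]

lemma emb_lower (hg : ∀ n, γ n + 2 ≤ γ (n+1)) {a b : ℕ → Bool} (hab : a ≠ b) :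
    ((3:ℝ) ^ γ (Delta a b))⁻¹ ≤ |emb γ a - emb γ b| := (emb_sub_bounds hg hab).1

lemma emb_upper (hg : ∀ n, γ n + 2 ≤ γ (n+1)) {a b : ℕ → Bool} (hab : a ≠ b) :
    |emb γ a - emb γ b| ≤ 3 / 3 ^ γ (Delta a b) := (emb_sub_bounds hg hab).2

lemma emb_inj (hg : ∀ n, γ n + 2 ≤ γ (n+1)) {a b : ℕ → Bool}
    (h : emb γ a = emb γ b) : a = b := by
  by_contra hab
  have h1 := emb_lower hg hab
  rw [h, sub_self, abs_zero] at h1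
  have : (0:ℝ) < (3 ^ γ (Delta a b))⁻¹ := by positivity
  linarith

end emb

/-- exponent scale for the even part -/
def g0 (n : ℕ) : ℕ := (n+1)^2
/-- exponent scale for the odd part -/
def g1 (n : ℕ) : ℕ := (n+1)^2 + (n+1)

lemma gap0 : ∀ n, g0 n + 2 ≤ g0 (n+1) := by
  intro n; simp only [g0]
  have h : (n+1+1)^2 = (n+1)^2 + (2*n+3) := by ring
  omega

lemma gap1 : ∀ n, g1 n + 2 ≤ g1 (n+1) := by
  intro n; simp only [g1]
  have h : (n+1+1)^2 = (n+1)^2 + (2*n+3) := by ring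
  omega

lemma g0_mono {m n : ℕ} (h : m ≤ n) : g0 m ≤ g0 n := gap_mono gap0 h
lemma g1_mono {m n : ℕ} (h : m ≤ n) : g1 m ≤ g1 n := gap_mono gap1 h

lemma contra_aux {K : ℝ} {t u v : ℕ} (huv : u ≤ v) (hK : K < 3 ^ t)
    (h : ((3:ℝ) ^ u)⁻¹ ≤ 3 * K / 3 ^ ((1 + t) + v)) : False := by
  have hvpos : (0:ℝ) < 3 ^ v := by positivity
  have hupos : (0:ℝ) < 3 ^ u := by positivity
  have hv : ((3:ℝ) ^ v)⁻¹ ≤ ((3:ℝ) ^ u)⁻¹ := by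
    apply inv_anti₀ hupos
    exact pow_le_pow_right₀ (by norm_num) huv
  have hden : (0:ℝ) < 3 ^ ((1 + t) + v) := by positivity
  have h2 : (3:ℝ) * K / 3 ^ ((1 + t) + v) < 3 ^ (1 + t) / 3 ^ ((1 + t) + v) := by
    apply (div_lt_div_iff_of_pos_right hden).mpr
    rw [pow_add, pow_one]
    linarith
  have h3 : (3:ℝ) ^ (1 + t) / 3 ^ ((1 + t) + v) = (3 ^ v)⁻¹ := by
    rw [pow_add ((3:ℝ)) (1+t) v]
    field_simp
  linarith

lemma key0 {K : NNReal} {f : ℝ → ℝ} (hf : LipschitzWith K f) {a a' b b' : ℕ → Bool}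
    (h1 : f (emb g0 a) = emb g1 b) (h2 : f (emb g0 a') = emb g1 b')
    (ha : a ≠ a') (hb : b ≠ b') (hK : (K:ℝ) < 3 ^ Delta a a') :
    Delta a a' ≤ Delta b b' := by
  by_contra hlt
  push_neg at hlt
  obtain ⟨e, he⟩ : ∃ e, Delta a a' = e + 1 := ⟨Delta a a' - 1, by omega⟩
  have hL : ((3:ℝ) ^ g1 (Delta b b'))⁻¹ ≤ |emb g1 b - emb g1 b'| := emb_lower gap1 hb
  have hU : |emb g0 a - emb g0 a'| ≤ 3 / 3 ^ g0 (Delta a a') := emb_upper gap0 ha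
  have hLip : |emb g1 b - emb g1 b'| ≤ (K:ℝ) * |emb g0 a - emb g0 a'| := by
    rw [← h1, ← h2, ← Real.dist_eq, ← Real.dist_eq]
    exact hf.dist_le_mul _ _
  have hexp : g0 (e+1) = (1 + (e+1)) + g1 e := by simp only [g0, g1]; ring
  have hcomb : ((3:ℝ) ^ g1 (Delta b b'))⁻¹ ≤ 3 * (K:ℝ) / 3 ^ ((1 + (e+1)) + g1 e) := by
    rw [← hexp]
    calc ((3:ℝ) ^ g1 (Delta b b'))⁻¹ ≤ (K:ℝ) * |emb g0 a - emb g0 a'| := hL.trans hLip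
      _ ≤ (K:ℝ) * (3 / 3 ^ g0 (Delta a a')) :=
          mul_le_mul_of_nonneg_left hU K.coe_nonneg
      _ = 3 * (K:ℝ) / 3 ^ g0 (e+1) := by rw [he]; ring
  exact contra_aux (g1_mono (by omega : Delta b b' ≤ e)) (by rw [he] at hK; exact hK) hcomb

lemma key1 {K : NNReal} {f : ℝ → ℝ} (hf : LipschitzWith K f) {a a' b b' : ℕ → Bool}
    (h1 : f (emb g1 b) = emb g0 a) (h2 : f (emb g1 b') = emb g0 a')
    (ha : a ≠ a') (hb : b ≠ b') (hK : (K:ℝ) < 3 ^ Delta b b') :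
    Delta b b' < Delta a a' := by
  by_contra hle
  push_neg at hle
  have hL : ((3:ℝ) ^ g0 (Delta a a'))⁻¹ ≤ |emb g0 a - emb g0 a'| := emb_lower gap0 ha
  have hU : |emb g1 b - emb g1 b'| ≤ 3 / 3 ^ g1 (Delta b b') := emb_upper gap1 hb
  have hLip : |emb g0 a - emb g0 a'| ≤ (K:ℝ) * |emb g1 b - emb g1 b'| := by
    rw [← h1, ← h2, ← Real.dist_eq, ← Real.dist_eq]
    exact hf.dist_le_mul _ _
  have hexp : g1 (Delta b b') = (1 + Delta b b') + g0 (Delta b b') := by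
    simp only [g0, g1]; ring
  have hcomb : ((3:ℝ) ^ g0 (Delta a a'))⁻¹ ≤
      3 * (K:ℝ) / 3 ^ ((1 + Delta b b') + g0 (Delta b b')) := by
    rw [← hexp]
    calc ((3:ℝ) ^ g0 (Delta a a'))⁻¹ ≤ (K:ℝ) * |emb g1 b - emb g1 b'| := hL.trans hLip
      _ ≤ (K:ℝ) * (3 / 3 ^ g1 (Delta b b')) :=
          mul_le_mul_of_nonneg_left hU K.coe_nonneg
      _ = 3 * (K:ℝ) / 3 ^ g1 (Delta b b') := by ring
  exact contra_aux (g0_mono hle) hK hcomb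

/-- guard: `f` is Lipschitz with constant below `3^m` -/
def Guard (f : ℝ → ℝ) (m : ℕ) : Prop :=
  ∃ K : NNReal, LipschitzWith K f ∧ (K:ℝ) < 3 ^ m

/-- the homogeneous pieces attached to a function `f` -/
def Hset (f : ℝ → ℝ) (l : List Bool) (i : Fin 2) : Set (ℕ → Bool) :=
  if i = 0 then
    {z | Guard f l.length ∧ (∀ k, (h : k < l.length) → ev z k = l.get ⟨k, h⟩) ∧
      f (emb g0 (ev z)) = emb g1 (od z)}
  else
    {z | Guard f l.length ∧ (∀ k, (h : k < l.length) → od z k = l.get ⟨k, h⟩) ∧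
      f (emb g1 (od z)) = emb g0 (ev z)}

lemma homog_Hset (f : ℝ → ℝ) (l : List Bool) (i : Fin 2) :
    IsHomog cmin (Hset f l i) := by
  fin_cases i
  · refine ⟨0, ?_⟩
    intro z hz z' hz' hne
    simp only [Hset, if_pos rfl, Set.mem_setOf_eq] at hz hz'
    obtain ⟨⟨K, hKf, hKlt⟩, hpre, heq⟩ := hz
    obtain ⟨-, hpre', heq'⟩ := hz'
    have hev : ev z ≠ ev z' := fun h =>
      hne (ext_evod h (emb_inj gap1 (by rw [← heq, ← heq', h])))
    have hdm : l.length ≤ Delta (ev z) (ev z') := by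
      by_contra hc
      push_neg at hc
      exact delta_mem hev ((hpre _ hc).trans (hpre' _ hc).symm)
    have hK' : (K:ℝ) < 3 ^ Delta (ev z) (ev z') :=
      hKlt.trans_le (pow_le_pow_right₀ (by norm_num) hdm)
    have hodc : ∀ j < Delta (ev z) (ev z'), od z j = od z' j := by
      by_cases hb : od z = od z'
      · intro j _; rw [hb]
      · intro j hj
        exact delta_lt hb (lt_of_lt_of_le hj (key0 hKf heq heq' hev hb hK'))
    have hΔ := delta_even hev hodc
    have hEven : Even (Delta z z') := by rw [hΔ]; exact even_two_mul _
    simp [cmin, hEven]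
  · refine ⟨1, ?_⟩
    intro z hz z' hz' hne
    have h10 : (1 : Fin 2) ≠ 0 := by decide
    simp only [Hset, if_neg h10, Set.mem_setOf_eq] at hz hz'
    obtain ⟨⟨K, hKf, hKlt⟩, hpre, heq⟩ := hz
    obtain ⟨-, hpre', heq'⟩ := hz'
    have hod : od z ≠ od z' := fun h =>
      hne (ext_evod (emb_inj gap0 (by rw [← heq, ← heq', h])) h)
    have hdm : l.length ≤ Delta (od z) (od z') := by
      by_contra hc
      push_neg at hc
      exact delta_mem hod ((hpre _ hc).trans (hpre' _ hc).symm)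
    have hK' : (K:ℝ) < 3 ^ Delta (od z) (od z') :=
      hKlt.trans_le (pow_le_pow_right₀ (by norm_num) hdm)
    have hevc : ∀ j ≤ Delta (od z) (od z'), ev z j = ev z' j := by
      by_cases hb : ev z = ev z'
      · intro j _; rw [hb]
      · intro j hj
        exact delta_lt hb (lt_of_le_of_lt hj (key1 hKf heq heq' hb hod hK'))
    have hΔ := delta_odd hod hevc
    have hOdd : ¬ Even (Delta z z') := by
      rw [hΔ, Nat.even_add_one]
      exact not_not_intro (even_two_mul _)
    simp [cmin, hOdd]

lemma cover_piece {F : Set (ℝ → ℝ)} (hLip : ∀ f ∈ F, ∃ K : NNReal, LipschitzWith K f)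
    (hcov : ∀ x y : ℝ, ∃ f ∈ F, f x = y ∨ f y = x) (z : ℕ → Bool) :
    ∃ f ∈ F, ∃ l : List Bool, ∃ i : Fin 2, z ∈ Hset f l i := by
  obtain ⟨f, hfF, hca⟩ := hcov (emb g0 (ev z)) (emb g1 (od z))
  obtain ⟨K, hK⟩ := hLip f hfF
  obtain ⟨m, hmK⟩ : ∃ m : ℕ, (K:ℝ) < 3 ^ m := pow_unbounded_of_one_lt _ (by norm_num)
  rcases hca with h | h
  · refine ⟨f, hfF, List.ofFn (fun j : Fin m => ev z j), 0, ?_⟩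
    simp only [Hset, if_pos rfl, Set.mem_setOf_eq]
    refine ⟨⟨K, hK, by simpa using hmK⟩, ?_, h⟩
    intro k hk
    simp [List.get_ofFn]
  · refine ⟨f, hfF, List.ofFn (fun j : Fin m => od z j), 1, ?_⟩
    have h10 : (1 : Fin 2) ≠ 0 := by decide
    simp only [Hset, if_neg h10, Set.mem_setOf_eq]
    refine ⟨⟨K, hK, by simpa using hmK⟩, ?_, h⟩
    intro k hk
    simp [List.get_ofFn]

lemma family_infinite {F : Set (ℝ → ℝ)}
    (hcov : ∀ x y : ℝ, ∃ f ∈ F, f x = y ∨ f y = x) : F.Infinite := by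
  intro hfin
  classical
  set n := hfin.toFinset.card with hn
  set A : Finset ℝ :=
    hfin.toFinset.biUnion (fun f => (Finset.univ : Finset (Fin (n+1))).image
      (fun i : Fin (n+1) => f ((i : ℕ) : ℝ))) with hA
  obtain ⟨y, hy⟩ : ∃ y : ℝ, y ∉ (A : Set ℝ) := (A.finite_toSet).infinite_compl.nonempty
  have hstep : ∀ i : Fin (n+1), ∃ f : ℝ → ℝ, f ∈ F ∧ f y = (i : ℕ) := by
    intro i
    obtain ⟨f, hfF, hca⟩ := hcov ((i : ℕ) : ℝ) y
    rcases hca with h | h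
    · exfalso
      apply hy
      have hyA : y ∈ A := by
        rw [hA]
        simp only [Finset.mem_biUnion, Finset.mem_image]
        exact ⟨f, hfin.mem_toFinset.mpr hfF, i, Finset.mem_univ i, h⟩
      exact Finset.mem_coe.mpr hyA
    · exact ⟨f, hfF, h⟩
  choose g hgF hgy using hstep
  have hginj : Function.Injective g := by
    intro i j hij
    have : ((i:ℕ):ℝ) = ((j:ℕ):ℝ) := by rw [← hgy i, ← hgy j, hij]
    have : (i:ℕ) = (j:ℕ) := Nat.cast_injective this
    exact Fin.ext this
  have hle : (Finset.univ : Finset (Fin (n+1))).card ≤ hfin.toFinset.card :=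
    Finset.card_le_card_of_injOn g (fun i _ => hfin.mem_toFinset.mpr (hgF i))
      (hginj.injOn)
  rw [Finset.card_univ, Fintype.card_fin] at hle
  omega

end St16

/-- `hm(c_min) ≤ Cov(Lip(ℝ))`: the homogeneity number of `c_min` is at most the least
cardinality of a family of Lipschitz real functions covering `ℝ × ℝ` (where `f` covers
`(x, y)` iff `f x = y` or `f y = x`). -/
theorem stmt16 :
    hm cmin ≤ sInf {μ : Cardinal | ∃ F : Set (ℝ → ℝ),
      #F = μ ∧ (∀ f ∈ F, ∃ K : NNReal, LipschitzWith K f) ∧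
      ∀ x y : ℝ, ∃ f ∈ F, f x = y ∨ f y = x} := by
  set S := {μ : Cardinal | ∃ F : Set (ℝ → ℝ),
      #F = μ ∧ (∀ f ∈ F, ∃ K : NNReal, LipschitzWith K f) ∧
      ∀ x y : ℝ, ∃ f ∈ F, f x = y ∨ f y = x} with hSdef
  have hne : S.Nonempty := by
    refine ⟨#(Set.range (fun c : ℝ => (fun _ => c : ℝ → ℝ))), Set.range _, rfl, ?_, ?_⟩
    · rintro f ⟨c, rfl⟩
      exact ⟨0, LipschitzWith.const c⟩
    · intro x y
      exact ⟨fun _ => y, ⟨y, rfl⟩, Or.inl rfl⟩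
  obtain ⟨F, hFcard, hFlip, hFcov⟩ := csInf_mem hne
  have hFinf : F.Infinite := St16.family_infinite hFcov
  haveI : Infinite ↥F := hFinf.to_subtype
  set G : Set (Set (ℕ → Bool)) :=
    Set.range (fun p : ↥F × List Bool × Fin 2 => St16.Hset p.1 p.2.1 p.2.2) with hG
  have hGhom : ∀ H ∈ G, IsHomog cmin H := by
    rintro H ⟨⟨f, l, i⟩, rfl⟩
    exact St16.homog_Hset f l i
  have hGcov : ⋃₀ G = Set.univ := by
    apply Set.eq_univ_of_forall
    intro z
    obtain ⟨f, hfF, l, i, hz⟩ := St16.cover_piece hFlip hFcov z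
    exact ⟨St16.Hset f l i, ⟨⟨⟨f, hfF⟩, l, i⟩, rfl⟩, hz⟩
  have h1 : hm cmin ≤ #G := csInf_le' ⟨G, rfl, hGhom, hGcov⟩
  have h2 : #G ≤ #(↥F × List Bool × Fin 2) := Cardinal.mk_range_le
  have hmul1 : (ℵ₀ : Cardinal) * ((2:ℕ) : Cardinal) = ℵ₀ :=
    Cardinal.mul_eq_left le_rfl (by exact_mod_cast (Cardinal.nat_lt_aleph0 2).le)
      two_ne_zero
  have h3 : #(↥F × List Bool × Fin 2) = #↥F := by
    rw [Cardinal.mk_prod, Cardinal.mk_prod, Cardinal.lift_id, Cardinal.lift_id,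
      Cardinal.lift_id, Cardinal.lift_id, Cardinal.mk_eq_aleph0 (List Bool),
      Cardinal.mk_fin, hmul1]
    exact Cardinal.mul_eq_left (Cardinal.aleph0_le_mk ↥F)
      (Cardinal.aleph0_le_mk ↥F) Cardinal.aleph0_ne_zero
  calc hm cmin ≤ #G := h1
    _ ≤ #(↥F × List Bool × Fin 2) := h2
    _ = #↥F := h3
    _ = sInf S := hFcard
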